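/- Under the feedback α = r, s* = (r s₁ + (1-r) s₂)/2, the quantity m = r s₁ + (1-r) s₂ satisfies ṁ = -μ(m/2)·(m/2) < 0 for m > 0, and m(t) → 0 as t → ∞; hence the target {max(s₁,s₂) ≤ s̲} is reached in finite time from any initial condition in ℝ₊². -/

import Mathlib

open Set Filter intervalIntegral Real


/-- Under the feedback α = r, s* = m/2 with m = r s₁+(1-r)s₂, one has ṁ = -μ(m/2)(m/2) < 0
    for m > 0, m(t) → 0, and the target {max(s₁,s₂) ≤ s̲} is reached in finite time. -/
theorem stmt6 (μ : ℝ → ℝ)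
    (hC1 : ContDiff ℝ 1 μ)
    (hmono : StrictMonoOn μ (Set.Ici 0))
    (hconc : ConcaveOn ℝ (Set.Ici 0) μ)
    (h0 : μ 0 = 0)
    (r d sb : ℝ) (hr : r ∈ Set.Ioo (0:ℝ) 1) (hd : 0 ≤ d) (hsb : 0 < sb)
    (s₁ s₂ m : ℝ → ℝ)
    (hm : ∀ t, m t = r * s₁ t + (1 - r) * s₂ t)
    (hinit : 0 ≤ s₁ 0 ∧ 0 ≤ s₂ 0)
    (hode1 : ∀ t ≥ (0:ℝ), HasDerivAt s₁
      (μ (m t / 2) * (m t / 2 - s₁ t) + d / r * (s₂ t - s₁ t)) t)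
    (hode2 : ∀ t ≥ (0:ℝ), HasDerivAt s₂
      (μ (m t / 2) * (m t / 2 - s₂ t) + d / (1 - r) * (s₁ t - s₂ t)) t) :
    (∀ t ≥ (0:ℝ), HasDerivAt m (-(μ (m t / 2) * (m t / 2))) t) ∧
    (∀ t ≥ (0:ℝ), 0 < m t → -(μ (m t / 2) * (m t / 2)) < 0) ∧
    Filter.Tendsto m Filter.atTop (nhds 0) ∧
    ∃ tf ≥ (0:ℝ), max (s₁ tf) (s₂ tf) ≤ sb := by
  obtain ⟨hr0, hr1⟩ := hr
  have h1r : (0:ℝ) < 1 - r := by linarith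
  have hμc : Continuous μ := hC1.continuous
  have hμmono := hmono.monotoneOn
  -- derivative of m
  have hm' : ∀ t ≥ (0:ℝ), HasDerivAt m (-(μ (m t / 2) * (m t / 2))) t := by
    intro t ht
    have key := (((hode1 t ht).const_mul r).add ((hode2 t ht).const_mul (1-r))).congr_of_eventuallyEq
      (Filter.Eventually.of_forall fun u => (hm u))
    refine key.congr_deriv ?_
    rw [hm t]
    field_simp
    ring
  -- the second bullet
  have hneg : ∀ t ≥ (0:ℝ), 0 < m t → -(μ (m t / 2) * (m t / 2)) < 0 := by
    intro t ht hmt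
    have hμpos : 0 < μ (m t / 2) := by
      have := hmono (Set.self_mem_Ici) (show m t / 2 ∈ Set.Ici (0:ℝ) by
        simp only [Set.mem_Ici]; linarith) (show (0:ℝ) < m t / 2 by linarith)
      rwa [h0] at this
    have : 0 < μ (m t / 2) * (m t / 2) := mul_pos hμpos (by linarith)
    linarith
  -- continuity of m at nonneg points
  have hmcont : ∀ t ≥ (0:ℝ), ContinuousAt m t := fun t ht => (hm' t ht).continuousAt
  -- auxiliary continuous function g
  set g : ℝ → ℝ := fun t => μ (m (max t 0) / 2) / 2 with hgdef
  have hmmax : Continuous fun t : ℝ => m (max t 0) := by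
    rw [continuous_iff_continuousAt]
    intro t
    show ContinuousAt (m ∘ fun t : ℝ => max t 0) t
    exact ContinuousAt.comp (x := t) (hmcont (max t 0) (le_max_right t 0))
      ((continuous_id.max continuous_const).continuousAt)
  have hgcont : Continuous g := ((hμc.comp (hmmax.div_const 2))).div_const 2
  set C : ℝ → ℝ := fun u => ∫ x in (0:ℝ)..u, g x with hCdef
  have hC : ∀ t, HasDerivAt C (g t) t := fun t => (hgcont.integral_hasStrictDerivAt 0 t).hasDerivAt
  have hC0 : C 0 = 0 := intervalIntegral.integral_same
  have hm0 : 0 ≤ m 0 := by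
    rw [hm 0]
    have := hinit.1; have := hinit.2; nlinarith
  -- m t = m 0 * exp (-C t)
  have hmform : ∀ t ≥ (0:ℝ), m t = m 0 * Real.exp (-C t) := by
    intro t ht
    have hconst : ∀ x ∈ Set.Icc (0:ℝ) t, m x * Real.exp (C x) = m 0 * Real.exp (C 0) := by
      apply constant_of_has_deriv_right_zero
      · intro x hx
        exact (((hmcont x hx.1).mul ((hC x).exp.continuousAt))).continuousWithinAt
      · intro x hx
        have hx0 : (0:ℝ) ≤ x := hx.1
        have hd1 : HasDerivAt (fun u => m u * Real.exp (C u))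
            (-(μ (m x / 2) * (m x / 2)) * Real.exp (C x) + m x * (Real.exp (C x) * g x)) x :=
          (hm' x hx0).mul ((hC x).exp)
        have hgx : g x = μ (m x / 2) / 2 := by simp [hgdef, max_eq_left hx0]
        have : (-(μ (m x / 2) * (m x / 2)) * Real.exp (C x) + m x * (Real.exp (C x) * g x)) = 0 := by
          rw [hgx]; ring
        rw [this] at hd1
        exact hd1.hasDerivWithinAt
    have := hconst t (Set.mem_Icc.mpr ⟨ht, le_refl t⟩)
    rw [hC0, Real.exp_zero, mul_one] at this
    have hepos := Real.exp_pos (C t)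
    rw [Real.exp_neg, ← this, mul_assoc, mul_inv_cancel₀ (Real.exp_ne_zero _), mul_one]
  have hmnn : ∀ t ≥ (0:ℝ), 0 ≤ m t := fun t ht => by
    rw [hmform t ht]; positivity
  -- g nonneg
  have hgnn : ∀ t, 0 ≤ g t := by
    intro t
    have h1 : (0:ℝ) ≤ m (max t 0) := hmnn _ (le_max_right t 0)
    have : μ 0 ≤ μ (m (max t 0) / 2) :=
      hμmono Set.self_mem_Ici (show m (max t 0) / 2 ∈ Set.Ici (0:ℝ) by
        simp only [Set.mem_Ici]; linarith) (by linarith)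
    rw [h0] at this
    simp only [hgdef]; linarith
  have hCmono : Monotone C :=
    monotone_of_deriv_nonneg (fun x => (hC x).differentiableAt) (fun x => by rw [(hC x).deriv]; exact hgnn x)
  -- m antitone on Ici 0
  have hanti : ∀ a t : ℝ, 0 ≤ a → a ≤ t → m t ≤ m a := by
    intro a t ha hat
    rw [hmform a ha, hmform t (ha.trans hat)]
    have : Real.exp (-C t) ≤ Real.exp (-C a) :=
      Real.exp_le_exp.mpr (by have := hCmono hat; linarith)
    exact mul_le_mul_of_nonneg_left this hm0
  -- for every ε > 0 m eventually dips below ε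
  have hsmall : ∀ ε > (0:ℝ), ∃ T ≥ (0:ℝ), m T < ε := by
    intro ε hε
    by_contra hcon
    push_neg at hcon
    set δ : ℝ := μ (ε / 2) / 2 with hδdef
    have hδ : 0 < δ := by
      have := hmono Set.self_mem_Ici (show ε / 2 ∈ Set.Ici (0:ℝ) by
        simp only [Set.mem_Ici]; linarith) (show (0:ℝ) < ε / 2 by linarith)
      rw [h0] at this
      simp only [hδdef]; linarith
    have hCt : ∀ t ≥ (0:ℝ), δ * t ≤ C t := by
      intro t ht
      have hcomp : ∀ x ∈ Set.Icc (0:ℝ) t, δ ≤ g x := by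
        intro x hx
        have hx0 : (0:ℝ) ≤ x := hx.1
        have hmx : ε ≤ m x := hcon x hx0
        have : μ (ε / 2) ≤ μ (m x / 2) :=
          hμmono (show ε / 2 ∈ Set.Ici (0:ℝ) by simp only [Set.mem_Ici]; linarith)
            (show m x / 2 ∈ Set.Ici (0:ℝ) by simp only [Set.mem_Ici]; linarith [hmnn x hx0])
            (by linarith)
        simp only [hgdef, hδdef, max_eq_left hx0]; linarith
      calc δ * t = ∫ _ in (0:ℝ)..t, δ := by
              rw [intervalIntegral.integral_const, smul_eq_mul]; ring
        _ ≤ ∫ x in (0:ℝ)..t, g x :=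
            intervalIntegral.integral_mono_on ht (intervalIntegrable_const) (hgcont.intervalIntegrable 0 t) hcomp
    have htend : Tendsto (fun t : ℝ => m 0 * Real.exp (-δ * t)) atTop (nhds 0) := by
      have h1 : Tendsto (fun t : ℝ => -δ * t) atTop atBot :=
        Tendsto.const_mul_atTop_of_neg (by linarith) tendsto_id
      have := (Real.tendsto_exp_atBot.comp h1).const_mul (m 0)
      simpa using this
    have hev : ∀ᶠ t in atTop, m 0 * Real.exp (-δ * t) < ε :=
      htend.eventually_lt_const hε
    obtain ⟨t, htlt, ht0⟩ := (hev.and (eventually_ge_atTop (0:ℝ))).exists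
    have h1 : m t ≤ m 0 * Real.exp (-δ * t) := by
      rw [hmform t ht0]
      have : Real.exp (-C t) ≤ Real.exp (-δ * t) :=
        Real.exp_le_exp.mpr (by have := hCt t ht0; linarith)
      exact mul_le_mul_of_nonneg_left this hm0
    have := hcon t ht0
    linarith
  -- tendsto
  have htendm : Filter.Tendsto m Filter.atTop (nhds 0) := by
    rw [Metric.tendsto_atTop]
    intro ε hε
    obtain ⟨T, hT0, hTε⟩ := hsmall ε hε
    refine ⟨T, fun t ht => ?_⟩
    have h1 : m t ≤ m T := hanti T t hT0 ht
    have h2 : 0 ≤ m t := hmnn t (hT0.trans ht)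
    rw [Real.dist_eq, abs_sub_lt_iff]
    constructor <;> linarith
  -- nonnegativity of solutions of s' = μ(m/2)(m/2-s) + c₀ (m - s)
  have hsnn : ∀ (s : ℝ → ℝ), 0 ≤ s 0 →
      (∀ t ≥ (0:ℝ), HasDerivAt s
        (μ (m t / 2) * (m t / 2 - s t) + d / (r * (1 - r)) * (m t - s t)) t) →
      ∀ t ≥ (0:ℝ), 0 ≤ s t := by
    intro s hs0 hsode t ht
    set c₀ : ℝ := d / (r * (1 - r)) with hc0def
    have hc0nn : 0 ≤ c₀ := by positivity
    set b : ℝ → ℝ := fun x => 2 * g x + c₀ with hbdef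
    have hbcont : Continuous b := by fun_prop
    set B : ℝ → ℝ := fun u => ∫ x in (0:ℝ)..u, b x with hBdef
    have hB : ∀ x, HasDerivAt B (b x) x := fun x => (hbcont.integral_hasStrictDerivAt 0 x).hasDerivAt
    have hB0 : B 0 = 0 := intervalIntegral.integral_same
    set y : ℝ → ℝ := fun u => s u * Real.exp (B u) with hydef
    have hymono : MonotoneOn y (Set.Ici 0) := by
      have hder : ∀ x : ℝ, 0 ≤ x → HasDerivAt y
          ((μ (m x / 2) * (m x / 2 - s x) + c₀ * (m x - s x)) * Real.exp (B x)
            + s x * (Real.exp (B x) * b x)) x :=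
        fun x hx => (hsode x hx).mul ((hB x).exp)
      apply monotoneOn_of_deriv_nonneg (convex_Ici 0)
      · intro x hx
        exact (((hsode x hx).continuousAt).mul ((hB x).exp.continuousAt)).continuousWithinAt
      · intro x hx
        rw [interior_Ici] at hx
        exact (hder x hx.le).differentiableAt.differentiableWithinAt
      · intro x hx
        rw [interior_Ici, Set.mem_Ioi] at hx
        rw [(hder x hx.le).deriv]
        have hgx : g x = μ (m x / 2) / 2 := by simp [hgdef, max_eq_left hx.le]
        have hval : (μ (m x / 2) * (m x / 2 - s x) + c₀ * (m x - s x)) * Real.exp (B x)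
            + s x * (Real.exp (B x) * b x)
            = (μ (m x / 2) * (m x / 2) + c₀ * m x) * Real.exp (B x) := by
          simp only [hbdef, hgx]; ring
        rw [hval]
        have h1 : 0 ≤ m x := hmnn x hx.le
        have h2 : 0 ≤ μ (m x / 2) := by
          have := hμmono Set.self_mem_Ici (show m x / 2 ∈ Set.Ici (0:ℝ) by
            simp only [Set.mem_Ici]; linarith) (by linarith)
          rwa [h0] at this
        positivity
      done
    have := hymono (Set.self_mem_Ici) (Set.mem_Ici.mpr ht) ht
    simp only [hydef, hB0, Real.exp_zero, mul_one] at this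
    have hepos := Real.exp_pos (B t)
    by_contra hcon
    push_neg at hcon
    nlinarith [this, hepos]
  -- rewrite the ODEs in symmetric form
  have hode1' : ∀ t ≥ (0:ℝ), HasDerivAt s₁
      (μ (m t / 2) * (m t / 2 - s₁ t) + d / (r * (1 - r)) * (m t - s₁ t)) t := by
    intro t ht
    convert hode1 t ht using 1
    rw [hm t]
    field_simp
    ring
  have hode2' : ∀ t ≥ (0:ℝ), HasDerivAt s₂
      (μ (m t / 2) * (m t / 2 - s₂ t) + d / (r * (1 - r)) * (m t - s₂ t)) t := by
    intro t ht
    convert hode2 t ht using 1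
    rw [hm t]
    field_simp
    ring
  have hs1nn := hsnn s₁ hinit.1 hode1'
  have hs2nn := hsnn s₂ hinit.2 hode2'
  refine ⟨hm', hneg, htendm, ?_⟩
  obtain ⟨T, hT0, hTm⟩ := hsmall (min (r * sb) ((1 - r) * sb)) (by positivity)
  refine ⟨T, hT0, ?_⟩
  have h1 := hs1nn T hT0
  have h2 := hs2nn T hT0
  have hmT := hm T
  have hminle1 : min (r * sb) ((1 - r) * sb) ≤ r * sb := min_le_left _ _
  have hminle2 : min (r * sb) ((1 - r) * sb) ≤ (1 - r) * sb := min_le_right _ _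
  have hA : s₁ T ≤ sb := by nlinarith
  have hB : s₂ T ≤ sb := by nlinarith
  exact max_le hA hB
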